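/- Let f ∈ ℝ^n be nonconstant with ‖f‖₁ = 1, and suppose |n₊ − n₋| ≤ n₀ where n₊ = |{i : f_i > 0}|, n₋ = |{i : f_i < 0}|, n₀ = |{i : f_i = 0}| (in particular 0 is a median of f). Set λ = TV(f) = F₁(f), and define v ∈ ℝ^n by v_i = sign(f_i) if f_i ≠ 0 and v_i = −(n₊ − n₋)/n₀ if f_i = 0 (if n₀ = 0 then n₊ = n₋ and no such entries occur); then ⟨v, 1⟩ = 0 and ‖v‖_∞ ≤ 1. If u ∈ ℝ^n satisfies TV(u) − λ⟨u, v⟩ < 0, then u is nonconstant and, for any median m of u, the vector u' = u − m·1 satisfies F₁(u') < F₁(f). -/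

import Mathlib

open Finset

/-- Total variation `TV(f) = ½ Σ_{i,j} w_ij |f_i − f_j|`. -/
noncomputable def TV {n : ℕ} (W : Fin n → Fin n → ℝ) (f : Fin n → ℝ) : ℝ :=
  (1 / 2) * ∑ i, ∑ j, W i j * |f i - f j|

/-- `F₁(f) = TV(f) / ‖f‖₁`. -/
noncomputable def F1 {n : ℕ} (W : Fin n → Fin n → ℝ) (f : Fin n → ℝ) : ℝ :=
  TV W f / ∑ i, |f i|

/-- Descent lemma for the modified IPM for the 1-Laplacian: for a nonconstant `f` with
`‖f‖₁ = 1` and `|n₊ − n₋| ≤ n₀`, the subgradient-type vector `v` satisfies `⟨v,1⟩ = 0`,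
`‖v‖_∞ ≤ 1`, and any `u` with negative inner objective `TV(u) − λ⟨u,v⟩ < 0` (where
`λ = TV(f) = F₁(f)`) is nonconstant and, after subtracting any median, strictly decreases
`F₁`. -/
theorem descent_modified_ipm (n : ℕ) (hn : 2 ≤ n)
    (W : Fin n → Fin n → ℝ)
    (hsym : ∀ i j, W i j = W j i) (hnonneg : ∀ i j, 0 ≤ W i j)
    (f : Fin n → ℝ)
    (hnonconst : ¬ ∃ c : ℝ, ∀ i, f i = c)
    (hnorm : ∑ i, |f i| = 1)
    (hmedzero : |((Finset.univ.filter (fun i => 0 < f i)).card : ℝ) -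
        ((Finset.univ.filter (fun i => f i < 0)).card : ℝ)| ≤
      ((Finset.univ.filter (fun i => f i = 0)).card : ℝ))
    (lam : ℝ) (hlam : lam = TV W f)
    (v : Fin n → ℝ)
    (hv : ∀ i, v i = if 0 < f i then 1 else if f i < 0 then -1 else
      -((((Finset.univ.filter (fun i => 0 < f i)).card : ℝ) -
          ((Finset.univ.filter (fun i => f i < 0)).card : ℝ)) /
        ((Finset.univ.filter (fun i => f i = 0)).card : ℝ))) :
    (∑ i, v i = 0) ∧ (∀ i, |v i| ≤ 1) ∧
    ∀ u : Fin n → ℝ, TV W u - lam * (∑ i, u i * v i) < 0 →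
      (¬ ∃ c : ℝ, ∀ i, u i = c) ∧
      ∀ m : ℝ, (∀ c : ℝ, ∑ i, |u i - m| ≤ ∑ i, |u i - c|) →
        F1 W (fun i => u i - m) < F1 W f := by
  set p : ℝ := ((Finset.univ.filter (fun i => 0 < f i)).card : ℝ) with hp
  set q : ℝ := ((Finset.univ.filter (fun i => f i < 0)).card : ℝ) with hq
  set z : ℝ := ((Finset.univ.filter (fun i => f i = 0)).card : ℝ) with hz
  -- sum of v is 0
  have hvsplit : ∀ i, v i = (if 0 < f i then (1:ℝ) else 0)
      - (if f i < 0 then (1:ℝ) else 0) - (if f i = 0 then (p - q)/z else 0) := by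
    intro i
    rw [hv i]
    rcases lt_trichotomy (f i) 0 with h | h | h
    · simp [h, not_lt.mpr h.le, h.ne]
    · simp [h]
    · simp [h, not_lt.mpr h.le, h.ne']
  have hsum1 : ∑ i, (if 0 < f i then (1:ℝ) else 0) = p := by
    simp [hp, Finset.sum_ite_eq, Finset.sum_boole]
  have hsum2 : ∑ i, (if f i < 0 then (1:ℝ) else 0) = q := by
    simp [hq, Finset.sum_boole]
  have hsum3 : ∑ i, (if f i = 0 then (p - q)/z else 0) = z * ((p - q)/z) := by
    rw [Finset.sum_ite]
    simp [hz, mul_comm]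
  have hvsum : ∑ i, v i = 0 := by
    simp only [hvsplit]
    rw [Finset.sum_sub_distrib, Finset.sum_sub_distrib, hsum1, hsum2, hsum3]
    rcases eq_or_lt_of_le (show (0:ℝ) ≤ z by positivity) with h0 | h0
    · have : |p - q| ≤ 0 := by rw [← h0] at hmedzero; exact hmedzero
      have hpq : p - q = 0 := abs_eq_zero.mp (le_antisymm this (abs_nonneg _))
      rw [hpq]; ring
    · field_simp; ring
  -- bound on v
  have hvbd : ∀ i, |v i| ≤ 1 := by
    intro i
    rw [hv i]
    rcases lt_trichotomy (f i) 0 with h | h | h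
    · simp [not_lt.mpr h.le, h]
    · have hz1 : (0:ℝ) < z := by
        have : i ∈ Finset.univ.filter (fun i => f i = 0) := by simp [h]
        have := Finset.card_pos.mpr ⟨i, this⟩
        rw [hz]; exact_mod_cast this
      simp only [h, lt_irrefl, if_false]
      rw [abs_neg, abs_div, abs_of_pos hz1]
      exact (div_le_one hz1).mpr hmedzero
    · simp [h]
  refine ⟨hvsum, hvbd, ?_⟩
  intro u hu
  -- nonnegativity of TV
  have hTVnn : ∀ g : Fin n → ℝ, 0 ≤ TV W g := by
    intro g
    unfold TV
    have : ∀ i ∈ Finset.univ, (0:ℝ) ≤ ∑ j, W i j * |g i - g j| := by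
      intro i _
      exact Finset.sum_nonneg fun j _ => mul_nonneg (hnonneg i j) (abs_nonneg _)
    have := Finset.sum_nonneg this
    linarith
  have hlamnn : 0 ≤ lam := hlam ▸ hTVnn f
  have hS : 0 < lam * (∑ i, u i * v i) := by linarith [hTVnn u]
  have hlampos : 0 < lam := by
    rcases hlamnn.lt_or_eq with h | h
    · exact h
    · exfalso; rw [← h] at hS; simp at hS
  constructor
  · rintro ⟨c, hc⟩
    have h1 : TV W u = 0 := by
      unfold TV
      simp [hc]
    have h2 : ∑ i, u i * v i = 0 := by
      simp only [hc]
      rw [← Finset.mul_sum, hvsum, mul_zero]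
    rw [h1, h2, mul_zero, sub_zero] at hu
    exact lt_irrefl _ hu
  · intro m _
    set u' : Fin n → ℝ := fun i => u i - m with hu'
    have hTVeq : TV W u' = TV W u := by
      unfold TV
      congr 1
      refine Finset.sum_congr rfl fun i _ => Finset.sum_congr rfl fun j _ => ?_
      simp [hu']
    have hSeq : ∑ i, u' i * v i = ∑ i, u i * v i := by
      simp only [hu', sub_mul]
      rw [Finset.sum_sub_distrib, ← Finset.mul_sum, hvsum, mul_zero, sub_zero]
    have hSle : ∑ i, u' i * v i ≤ ∑ i, |u' i| := by
      refine Finset.sum_le_sum fun i _ => ?_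
      calc u' i * v i ≤ |u' i * v i| := le_abs_self _
        _ = |u' i| * |v i| := abs_mul _ _
        _ ≤ |u' i| * 1 := mul_le_mul_of_nonneg_left (hvbd i) (abs_nonneg _)
        _ = |u' i| := mul_one _
    have hkey : TV W u' < lam * ∑ i, |u' i| := by
      calc TV W u' = TV W u := hTVeq
        _ < lam * (∑ i, u i * v i) := by linarith [hu]
        _ = lam * (∑ i, u' i * v i) := by rw [hSeq]
        _ ≤ lam * ∑ i, |u' i| := mul_le_mul_of_nonneg_left hSle hlampos.le
    have hnormpos : 0 < ∑ i, |u' i| := by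
      by_contra h
      push_neg at h
      have h0 : ∑ i, |u' i| = 0 :=
        le_antisymm h (Finset.sum_nonneg fun i _ => abs_nonneg _)
      rw [h0, mul_zero] at hkey
      exact absurd hkey (not_lt.mpr (hTVnn u'))
    have : F1 W u' < lam := by
      unfold F1
      rw [div_lt_iff₀ hnormpos]
      exact hkey
    have hF1f : F1 W f = lam := by
      unfold F1
      rw [hnorm, div_one, hlam]
    rw [hF1f]
    exact this
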